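/- Let k ≥ 2 and let F(z) ∈ ℂ[[z]] be a k-Mahler function. If F extends to a meromorphic function on all of ℂ with only finitely many poles, then F is a rational function. -/

import Mathlib

open Filter Metric

section KMahlerAux

open Topology Set Polynomial

lemma poly_upper (p : Polynomial ℂ) : ∃ C : ℝ, 0 ≤ C ∧
    ∀ z : ℂ, 1 ≤ ‖z‖ → ‖p.eval z‖ ≤ C * ‖z‖ ^ p.natDegree := by
  refine ⟨∑ i ∈ Finset.range (p.natDegree + 1), ‖p.coeff i‖,
    Finset.sum_nonneg fun i _ => norm_nonneg _, fun z hz => ?_⟩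
  rw [Polynomial.eval_eq_sum_range, Finset.sum_mul]
  refine (norm_sum_le _ _).trans (Finset.sum_le_sum fun i hi => ?_)
  rw [norm_mul, norm_pow]
  refine mul_le_mul_of_nonneg_left ?_ (norm_nonneg _)
  exact pow_le_pow_right₀ (by linarith) (Finset.mem_range_succ_iff.mp hi)

lemma poly_lower (p : Polynomial ℂ) (hp : p ≠ 0) : ∃ c R : ℝ, 0 < c ∧
    ∀ z : ℂ, R ≤ ‖z‖ → c ≤ ‖p.eval z‖ := by
  rcases le_or_gt p.degree 0 with hd | hd
  · have hc := Polynomial.degree_le_zero_iff.mp hd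
    set c := p.coeff 0 with hcc
    refine ⟨‖c‖, 0, ?_, fun z _ => by rw [hc]; simp⟩
    simp only [norm_pos_iff]
    intro h; exact hp (by rw [hc, h, map_zero])
  · have ht : Tendsto (fun z : ℂ => ‖p.eval z‖) (cocompact ℂ) atTop :=
      p.tendsto_norm_atTop hd tendsto_norm_cocompact_atTop
    have hmem : {z : ℂ | 1 ≤ ‖p.eval z‖} ∈ cocompact ℂ := ht.eventually_ge_atTop 1
    obtain ⟨K, hK, hKs⟩ := Filter.mem_cocompact.mp hmem
    obtain ⟨R, hR⟩ := hK.isBounded.subset_closedBall 0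
    refine ⟨1, R + 1, one_pos, fun z hz => ?_⟩
    refine hKs fun hzK => ?_
    have := mem_closedBall_zero_iff.mp (hR hzK)
    linarith

lemma entire_poly_growth (M : ℕ) : ∀ (C : ℝ) (G : ℂ → ℂ), Differentiable ℂ G →
    (∀ w : ℂ, ‖G w‖ ≤ C * max 1 ‖w‖ ^ M) → ∃ p : Polynomial ℂ, ∀ w, G w = p.eval w := by
  induction M with
  | zero =>
    intro C G hG hb
    have hbd : Bornology.IsBounded (Set.range G) := by
      rw [isBounded_iff_forall_norm_le]
      exact ⟨C, by rintro x ⟨w, rfl⟩; simpa using hb w⟩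
    obtain ⟨c, hc⟩ := hG.exists_eq_const_of_bounded hbd
    exact ⟨Polynomial.C c, fun w => by simp [hc]⟩
  | succ M ih =>
    intro C G hG hb
    have hC0 : 0 ≤ C := le_trans (norm_nonneg (G 0)) (by simpa using hb 0)
    set g := dslope G 0 with hg
    have hgd : Differentiable ℂ g := by
      intro z
      rcases eq_or_ne z 0 with rfl | hz
      · obtain ⟨q, hq⟩ := hG.analyticAt 0
        exact (hq.has_fpower_series_dslope_fslope).analyticAt.differentiableAt
      · exact (differentiableAt_dslope_of_ne hz).mpr (hG.differentiableAt)
    obtain ⟨C₂, hC₂⟩ := (isCompact_closedBall (0:ℂ) 1).exists_bound_of_continuousOn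
      hgd.continuous.continuousOn
    have hC₂0 : 0 ≤ C₂ := le_trans (norm_nonneg _) (hC₂ 0 (by simp))
    have hgb : ∀ w : ℂ, ‖g w‖ ≤ max (2*C) C₂ * max 1 ‖w‖ ^ M := by
      intro w
      have h1 : (1:ℝ) ≤ max 1 ‖w‖ ^ M := one_le_pow₀ (le_max_left _ _)
      rcases le_or_gt ‖w‖ 1 with hw | hw
      · calc ‖g w‖ ≤ C₂ := hC₂ w (by simpa [mem_closedBall_zero_iff] using hw)
          _ = C₂ * 1 := (mul_one _).symm
          _ ≤ max (2*C) C₂ * max 1 ‖w‖ ^ M :=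
            mul_le_mul (le_max_right _ _) h1 one_pos.le (le_trans hC₂0 (le_max_right _ _))
      · have hw0 : w ≠ 0 := by intro h; rw [h] at hw; simp at hw; linarith
        have hkey : (w - 0) • g w = G w - G 0 := sub_smul_dslope G 0 w
        have hnorm : ‖w‖ * ‖g w‖ = ‖G w - G 0‖ := by
          rw [← hkey]; simp [norm_smul, mul_comm]
        have hmax : max 1 ‖w‖ = ‖w‖ := max_eq_right hw.le
        have hGw : ‖G w - G 0‖ ≤ 2 * C * ‖w‖ ^ (M+1) := by
          have h2 := hb w
          have h3 := hb 0
          rw [hmax] at h2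
          simp only [norm_zero, max_self] at h3
          have h4 : ‖G 0‖ ≤ C := by simpa using h3
          have h5 : C ≤ C * ‖w‖ ^ (M+1) := by
            nlinarith [pow_le_pow_left₀ (by norm_num : (0:ℝ) ≤ 1) hw.le (M+1),
              (one_le_pow₀ hw.le : (1:ℝ) ≤ ‖w‖^(M+1))]
          calc ‖G w - G 0‖ ≤ ‖G w‖ + ‖G 0‖ := norm_sub_le _ _
            _ ≤ C * ‖w‖ ^ (M+1) + C := by linarith
            _ ≤ 2 * C * ‖w‖ ^ (M+1) := by linarith
        have hwpos : 0 < ‖w‖ := by linarith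
        have : ‖g w‖ * ‖w‖ ≤ (2 * C * ‖w‖ ^ M) * ‖w‖ := by
          calc ‖g w‖ * ‖w‖ = ‖G w - G 0‖ := by rw [← hnorm]; ring
            _ ≤ 2 * C * ‖w‖ ^ (M+1) := hGw
            _ = 2 * C * ‖w‖ ^ M * ‖w‖ := by ring
        have h6 : ‖g w‖ ≤ 2 * C * ‖w‖ ^ M := le_of_mul_le_mul_right this hwpos
        rw [hmax]
        exact h6.trans (mul_le_mul_of_nonneg_right (le_max_left _ _) (by positivity))
    obtain ⟨p, hp⟩ := ih (max (2*C) C₂) g hgd hgb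
    refine ⟨Polynomial.C (G 0) + Polynomial.X * p, fun w => ?_⟩
    have hkey : (w - 0) • g w = G w - G 0 := sub_smul_dslope G 0 w
    simp only [sub_zero, smul_eq_mul] at hkey
    simp only [Polynomial.eval_add, Polynomial.eval_mul, Polynomial.eval_C, Polynomial.eval_X,
      ← hp w]
    linear_combination -hkey


lemma countable_nonanalytic {f : ℂ → ℂ} (h : MeromorphicOn f Set.univ) :
    {z : ℂ | ¬ AnalyticAt ℂ f z}.Countable := by
  set NA := {z : ℂ | ¬ AnalyticAt ℂ f z} with hNA
  have h1 : ∀ x : ℂ, Disjoint (𝓝[≠] x) (𝓟 NA) := by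
    intro x
    rw [disjoint_principal_right]
    filter_upwards [(h x (Set.mem_univ x)).eventually_analyticAt] with z hz
    simpa [NA] using hz
  have h2 : IsClosed NA ∧ IsDiscrete NA := isClosed_and_discrete_iff.2 h1
  have h3 := h2.1.tendsto_coe_cofinite_of_isDiscrete h2.2
  have hfin : ∀ n : ℕ, {z : NA | (z : ℂ) ∈ compactCovering ℂ n}.Finite := by
    intro n
    have hK := isCompact_compactCovering ℂ n
    have hmem : ((↑) : NA → ℂ) ⁻¹' (compactCovering ℂ n)ᶜ ∈ cofinite :=
      h3 hK.compl_mem_cocompact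
    rw [Set.preimage_compl, mem_cofinite, compl_compl] at hmem
    exact hmem
  have huniv : (Set.univ : Set NA).Countable := by
    have he : (Set.univ : Set NA) = ⋃ n, {z : NA | (z : ℂ) ∈ compactCovering ℂ n} := by
      ext z
      simp only [Set.mem_univ, true_iff, Set.mem_iUnion, Set.mem_setOf_eq]
      exact exists_mem_compactCovering _
    rw [he]
    exact Set.countable_iUnion fun n => (hfin n).countable
  exact Set.countable_coe_iff.mp (Set.countable_univ_iff.mp huniv)

lemma countable_pow_preimage {s : Set ℂ} (hs : s.Countable) {N : ℕ} (hN : 0 < N) :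
    {z : ℂ | z ^ N ∈ s}.Countable := by
  have he : {z : ℂ | z ^ N ∈ s} = ⋃ w ∈ s, {z : ℂ | z ^ N = w} := by
    ext z; simp
  rw [he]
  refine hs.biUnion fun w _ => Set.Finite.countable ?_
  have hsub : {z : ℂ | z ^ N = w} ⊆ {z : ℂ | (X ^ N - C w : Polynomial ℂ).IsRoot z} := by
    intro z hz
    simp only [Set.mem_setOf_eq, Polynomial.IsRoot, Polynomial.eval_sub, Polynomial.eval_pow,
      Polynomial.eval_X, Polynomial.eval_C]
    rw [hz]; ring
  exact (Polynomial.finite_setOf_isRoot (Polynomial.X_pow_sub_C_ne_zero hN w)).subset hsub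

lemma frequently_of_countable_compl {s : Set ℂ} (hs : s.Countable) (x : ℂ) :
    ∃ᶠ z in 𝓝[≠] x, z ∉ s := by
  rw [Filter.Frequently]
  intro hev
  simp only [not_not] at hev
  rw [eventually_nhdsWithin_iff] at hev
  obtain ⟨ε, hε, hball⟩ := Metric.eventually_nhds_iff.mp hev
  have hinj : Function.Injective (fun t : ℝ => x + (t : ℂ)) := by
    intro a b hab
    simpa using hab
  have hsub : Set.Ioo (0:ℝ) ε ⊆ (fun t : ℝ => x + (t : ℂ)) ⁻¹' s := by
    rintro t ⟨ht0, htε⟩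
    refine hball ?_ ?_
    · simp only [dist_eq_norm]
      simpa [Complex.norm_real, abs_of_pos ht0] using htε
    · simp only [Set.mem_compl_iff, Set.mem_singleton_iff]
      intro hc
      have : (t : ℂ) = 0 := by linear_combination hc
      exact ht0.ne' (by exact_mod_cast this)
  have hcount : (Set.Ioo (0:ℝ) ε).Countable := (hs.preimage hinj).mono hsub
  rw [← Cardinal.le_aleph0_iff_set_countable, Cardinal.mk_Ioo_real hε] at hcount
  exact absurd hcount (not_le.mpr Cardinal.aleph0_lt_continuum)

lemma tendsto_atTop_of_neg_order {f g : ℂ → ℂ} {x : ℂ} {m : ℤ} (hm : m < 0)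
    (hg : AnalyticAt ℂ g x) (hgx : g x ≠ 0)
    (hrep : ∀ᶠ z in 𝓝[≠] x, f z = (z - x) ^ m * g z) :
    Tendsto (fun z => ‖f z‖) (𝓝[≠] x) atTop := by
  set p := (-m).toNat with hp
  have hp0 : 0 < p := by omega
  have hmp : m = -(p : ℤ) := by omega
  have hb : Tendsto (fun z : ℂ => ‖z - x‖ ^ p) (𝓝[≠] x) (𝓝[>] 0) := by
    rw [tendsto_nhdsWithin_iff]
    constructor
    · have hc : Continuous (fun z : ℂ => ‖z - x‖ ^ p) := by fun_prop
      have h4 := hc.tendsto x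
      rw [show ‖x - x‖ ^ p = 0 by simp [zero_pow hp0.ne']] at h4
      exact h4.mono_left nhdsWithin_le_nhds
    · filter_upwards [self_mem_nhdsWithin] with z hz
      have hzz : z - x ≠ 0 := sub_ne_zero.mpr hz
      exact pow_pos (norm_pos_iff.mpr hzz) p
  have h1 : Tendsto (fun z : ℂ => (‖z - x‖ ^ p)⁻¹) (𝓝[≠] x) atTop :=
    tendsto_inv_nhdsGT_zero.comp hb
  have h2 : Tendsto (fun z : ℂ => (‖g x‖ / 2) * (‖z - x‖ ^ p)⁻¹) (𝓝[≠] x) atTop :=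
    h1.const_mul_atTop (by have := norm_pos_iff.mpr hgx; positivity)
  refine tendsto_atTop_mono' _ ?_ h2
  have h3 : ∀ᶠ z in 𝓝[≠] x, ‖g x‖ / 2 ≤ ‖g z‖ := by
    have hcont : Tendsto (fun z => ‖g z‖) (𝓝[≠] x) (𝓝 ‖g x‖) :=
      (hg.continuousAt.norm.tendsto).mono_left nhdsWithin_le_nhds
    have hhalf : ‖g x‖ / 2 < ‖g x‖ := by have := norm_pos_iff.mpr hgx; linarith
    exact hcont.eventually (eventually_ge_nhds hhalf)
  filter_upwards [hrep, h3, self_mem_nhdsWithin] with z hzrep hzg hzx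
  have hzx' : (z : ℂ) - x ≠ 0 := sub_ne_zero.mpr hzx
  have : ‖f z‖ = (‖z - x‖ ^ p)⁻¹ * ‖g z‖ := by
    rw [hzrep, norm_mul, hmp, zpow_neg, norm_inv, norm_zpow, zpow_natCast]
  rw [this]
  calc ‖g x‖ / 2 * (‖z - x‖ ^ p)⁻¹ ≤ ‖g z‖ * (‖z - x‖ ^ p)⁻¹ := by
        apply mul_le_mul_of_nonneg_right hzg (by positivity)
    _ = (‖z - x‖ ^ p)⁻¹ * ‖g z‖ := mul_comm _ _

lemma exists_entire (f : ℂ → ℂ)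
    (h : ∀ x : ℂ, ∃ g : ℂ → ℂ, AnalyticAt ℂ g x ∧ ∀ᶠ z in 𝓝[≠] x, f z = g z)
    (ha : ∀ x : ℂ, ∀ᶠ z in 𝓝[≠] x, AnalyticAt ℂ f z) :
    ∃ G : ℂ → ℂ, Differentiable ℂ G ∧ ∀ z, AnalyticAt ℂ f z → G z = f z := by
  classical
  choose g hg hfg using h
  set G : ℂ → ℂ := fun z => if AnalyticAt ℂ f z then f z else limUnder (𝓝[≠] z) f with hGdef
  have htend : ∀ x, Tendsto f (𝓝[≠] x) (𝓝 (g x x)) :=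
    fun x => ((hg x).continuousAt.tendsto.mono_left nhdsWithin_le_nhds).congr'
      (Filter.EventuallyEq.symm (hfg x))
  have hGx : ∀ x, G x = g x x := by
    intro x
    by_cases hx : AnalyticAt ℂ f x
    · have h1 : Tendsto f (𝓝[≠] x) (𝓝 (f x)) :=
        hx.continuousAt.tendsto.mono_left nhdsWithin_le_nhds
      simp only [hGdef, if_pos hx]
      exact tendsto_nhds_unique h1 (htend x)
    · simp only [hGdef, if_neg hx]
      exact (htend x).limUnder_eq
  have hGev : ∀ x, G =ᶠ[𝓝 x] g x := by
    intro x
    have h3 : ∀ᶠ z in 𝓝[≠] x, G z = g x z := by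
      filter_upwards [ha x, hfg x] with z h1 h2
      simp only [hGdef, if_pos h1]
      exact h2
    rw [eventually_nhdsWithin_iff] at h3
    filter_upwards [h3] with z hz
    by_cases hzx : z = x
    · subst hzx; exact hGx z
    · exact hz hzx
  have hGan : ∀ x, AnalyticAt ℂ G x := fun x => (hg x).congr (hGev x).symm
  refine ⟨G, fun x => (hGan x).differentiableAt, fun z hz => by simp [hGdef, if_pos hz]⟩

end KMahlerAux

open Topology Set Polynomial in
/-- A `k`-Mahler function which is meromorphic on all of ℂ with only finitely many poles
is a rational function. Here `f : ℂ → ℂ` is analytic at `0`, satisfies the Mahler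
functional equation on a neighbourhood of `0`, and is meromorphic on ℂ with finite
pole set; the conclusion is that `f` agrees with a rational function `P/Q` wherever
it is analytic. -/
theorem kMahler_meromorphic_is_rational
    (k : ℕ) (hk : 2 ≤ k) (d : ℕ) (a : ℕ → Polynomial ℂ) (ha : a 0 * a d ≠ 0)
    (f : ℂ → ℂ) (hf0 : AnalyticAt ℂ f 0)
    (heq : ∃ r : ℝ, 0 < r ∧ ∀ z ∈ ball (0 : ℂ) r,
      ∑ j ∈ Finset.range (d + 1), (a j).eval z * f (z ^ k ^ j) = 0)
    (hmero : MeromorphicOn f Set.univ)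
    (hpoles : {x : ℂ | Tendsto (fun z => ‖f z‖) (nhdsWithin x {x}ᶜ) atTop}.Finite) :
    ∃ P Q : Polynomial ℂ, Q ≠ 0 ∧ ∀ z : ℂ, AnalyticAt ℂ f z →
      f z * Q.eval z = P.eval z := by
  classical
  set nn : ℂ → ℕ := fun x => (-(WithTop.untopD 0 (meromorphicOrderAt f x))).toNat with hnn
  set Q₀ : Polynomial ℂ := ∏ x ∈ hpoles.toFinset, (X - C x) ^ nn x with hQ₀def
  have hQ₀ : Q₀ ≠ 0 := by
    rw [hQ₀def]
    exact Finset.prod_ne_zero_iff.mpr fun x _ => pow_ne_zero _ (X_sub_C_ne_zero x)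
  -- Step 1 : representation of Q₀ * f near every point
  have hrep : ∀ x : ℂ, ∃ g : ℂ → ℂ, AnalyticAt ℂ g x ∧
      ∀ᶠ z in 𝓝[≠] x, Q₀.eval z * f z = g z := by
    intro x
    have hmx : MeromorphicAt f x := hmero x (Set.mem_univ x)
    by_cases hx : Tendsto (fun z => ‖f z‖) (𝓝[≠] x) atTop
    · -- pole case
      have hxS : x ∈ hpoles.toFinset := hpoles.mem_toFinset.mpr hx
      have hne : meromorphicOrderAt f x ≠ ⊤ := by
        intro htop
        have h0 := meromorphicOrderAt_eq_top_iff.mp htop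
        have h1 := hx.eventually_ge_atTop 1
        obtain ⟨z, hz1, hz0⟩ := (h1.and h0).exists
        rw [hz0] at hz1
        norm_num at hz1
      obtain ⟨m, hm⟩ := WithTop.ne_top_iff_exists.mp hne
      obtain ⟨g, hg, hgx, hgrep⟩ := (meromorphicOrderAt_eq_int_iff (n := m) hmx).mp hm.symm
      have hord : WithTop.untopD 0 (meromorphicOrderAt f x) = m := by rw [← hm]; rfl
      have hnx : nn x = (-m).toNat := by rw [hnn]; simp only [hord]
      have hmn : 0 ≤ m + (nn x : ℤ) := by rw [hnx]; omega
      set R : Polynomial ℂ := ∏ y ∈ hpoles.toFinset.erase x, (X - C y) ^ nn y with hR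
      have hfac : ∀ z : ℂ, Q₀.eval z = (z - x) ^ nn x * R.eval z := by
        intro z
        rw [hQ₀def, ← Finset.mul_prod_erase _ _ hxS]
        simp [hR]
      refine ⟨fun z => (z - x) ^ (m + (nn x : ℤ)).toNat * (R.eval z * g z),
        (((analyticAt_id.sub analyticAt_const).pow _).mul
          ((R.differentiable.analyticAt x).mul hg)), ?_⟩
      filter_upwards [hgrep, self_mem_nhdsWithin] with z hzrep hzx
      have hzx' : z - x ≠ 0 := sub_ne_zero.mpr hzx
      rw [hfac z, hzrep, smul_eq_mul]
      have e1 : ((m + (nn x : ℤ)).toNat : ℤ) = m + (nn x : ℤ) := Int.toNat_of_nonneg hmn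
      have e2 : (z - x) ^ ((m + (nn x : ℤ)).toNat) = (z - x) ^ (m + (nn x : ℤ)) := by
        rw [← zpow_natCast, e1]
      rw [e2, zpow_add₀ hzx', zpow_natCast]
      ring
    · -- regular case
      rcases eq_or_ne (meromorphicOrderAt f x) ⊤ with htop | hne
      · refine ⟨0, analyticAt_const, ?_⟩
        filter_upwards [meromorphicOrderAt_eq_top_iff.mp htop] with z hz
        simp [hz]
      · obtain ⟨m, hm⟩ := WithTop.ne_top_iff_exists.mp hne
        obtain ⟨g, hg, hgx, hgrep⟩ := (meromorphicOrderAt_eq_int_iff (n := m) hmx).mp hm.symm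
        have hgrep' : ∀ᶠ z in 𝓝[≠] x, f z = (z - x) ^ m * g z := by
          filter_upwards [hgrep] with z hz
          rw [hz, smul_eq_mul]
        have hm0 : 0 ≤ m := by
          by_contra hc
          push_neg at hc
          exact hx (tendsto_atTop_of_neg_order hc hg hgx hgrep')
        refine ⟨fun z => Q₀.eval z * ((z - x) ^ m.toNat * g z),
          (Q₀.differentiable.analyticAt x).mul
            (((analyticAt_id.sub analyticAt_const).pow _).mul hg), ?_⟩
        filter_upwards [hgrep', self_mem_nhdsWithin] with z hz hzx
        rw [hz]
        congr 1
        rw [← zpow_natCast, Int.toNat_of_nonneg hm0]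
  -- Step 2 : glue into an entire function G
  have hae : ∀ x : ℂ, ∀ᶠ z in 𝓝[≠] x, AnalyticAt ℂ (fun w => Q₀.eval w * f w) z := by
    intro x
    filter_upwards [(hmero x (Set.mem_univ x)).eventually_analyticAt] with z hz
    exact (Q₀.differentiable.analyticAt z).mul hz
  obtain ⟨G, hGdiff, hGeq⟩ := exists_entire (fun z => Q₀.eval z * f z) hrep hae
  have hGf : ∀ z : ℂ, AnalyticAt ℂ f z → G z = Q₀.eval z * f z := by
    intro z hz
    exact hGeq z ((Q₀.differentiable.analyticAt z).mul hz)
  -- Step 3 : the functional equation for G on all of ℂ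
  set E : ℂ → ℂ := fun z => ∑ j ∈ Finset.range (d + 1), (a j).eval z *
      ((∏ i ∈ (Finset.range (d + 1)).erase j, Q₀.eval (z ^ k ^ i)) * G (z ^ k ^ j)) with hE
  have hEdiff : Differentiable ℂ E := by
    refine Differentiable.fun_sum fun j _ => (a j).differentiable.mul (Differentiable.mul ?_ ?_)
    · exact Differentiable.fun_finset_prod fun i _ =>
        Q₀.differentiable.comp (differentiable_pow _)
    · exact hGdiff.comp (differentiable_pow _)
  have hE0 : ∀ z : ℂ, E z = 0 := by
    obtain ⟨r, hr, hfe⟩ := heq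
    have hNA : {z : ℂ | ¬ AnalyticAt ℂ f z}.Countable := countable_nonanalytic hmero
    set Bad : Set ℂ := ⋃ j ∈ Finset.range (d+1), {z : ℂ | z ^ k ^ j ∈ {z : ℂ | ¬ AnalyticAt ℂ f z}}
      with hBad
    have hBadc : Bad.Countable := by
      refine Set.Countable.biUnion (Set.Finite.countable (Finset.range (d+1)).finite_toSet) ?_
      intro j _
      exact countable_pow_preimage hNA (pow_pos (by omega) j)
    have hfreq : ∃ᶠ z in 𝓝[≠] (0:ℂ), E z = 0 := by
      have h1 := frequently_of_countable_compl hBadc 0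
      have h2 : ∀ᶠ z in 𝓝[≠] (0:ℂ), z ∈ ball (0:ℂ) r :=
        Filter.Eventually.filter_mono nhdsWithin_le_nhds (ball_mem_nhds 0 hr)
      refine (h1.and_eventually h2).mono ?_
      rintro z ⟨hzB, hzr⟩
      have hz : ∀ j ∈ Finset.range (d+1), AnalyticAt ℂ f (z ^ k ^ j) := by
        intro j hj
        by_contra hc
        refine hzB ?_
        rw [hBad]
        exact Set.mem_biUnion hj hc
      have hterm : ∀ j ∈ Finset.range (d+1),
          (a j).eval z * ((∏ i ∈ (Finset.range (d+1)).erase j, Q₀.eval (z ^ k ^ i)) *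
            G (z ^ k ^ j))
          = (∏ i ∈ Finset.range (d+1), Q₀.eval (z ^ k ^ i)) *
            ((a j).eval z * f (z ^ k ^ j)) := by
        intro j hj
        rw [hGf _ (hz j hj), ← Finset.prod_erase_mul _ _ hj]
        ring
      rw [hE]
      simp only []
      rw [Finset.sum_congr rfl hterm, ← Finset.mul_sum, hfe z hzr, mul_zero]
    have hEan : AnalyticOnNhd ℂ E Set.univ := fun x _ => hEdiff.analyticAt x
    intro z
    exact hEan.eqOn_zero_of_preconnected_of_frequently_eq_zero isPreconnected_univ
      (Set.mem_univ 0) hfreq (Set.mem_univ z)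
  -- Step 4 : conclude
  have key : ∃ p : Polynomial ℂ, ∀ w, G w = p.eval w := by
    rcases Nat.eq_zero_or_pos d with hd0 | hd1
    · -- d = 0 : G vanishes identically
      subst hd0
      have ha0 : a 0 ≠ 0 := left_ne_zero_of_mul ha
      have hG0 : ∀ z : ℂ, (a 0).eval z * G z = 0 := by
        intro z
        have h := hE0 z
        rw [hE] at h
        simpa using h
      have hfreq : ∃ᶠ z in 𝓝[≠] (0:ℂ), G z = 0 := by
        have h1 := frequently_of_countable_compl
          ((Polynomial.finite_setOf_isRoot ha0).countable) 0
        refine h1.mono fun z hz => ?_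
        have h2 : (a 0).eval z ≠ 0 := hz
        have := hG0 z
        exact (mul_eq_zero.mp this).resolve_left h2
      have hGan : AnalyticOnNhd ℂ G Set.univ := fun x _ => hGdiff.analyticAt x
      refine ⟨0, fun w => ?_⟩
      have := hGan.eqOn_zero_of_preconnected_of_frequently_eq_zero isPreconnected_univ
        (Set.mem_univ 0) hfreq (Set.mem_univ w)
      simpa using this
    · -- d ≥ 1 : growth estimate
      have had : a d ≠ 0 := right_ne_zero_of_mul ha
      obtain ⟨c₁, Ra, hc₁, hlow₁⟩ := poly_lower (a d) had
      obtain ⟨c₂, Rq, hc₂, hlow₂⟩ := poly_lower Q₀ hQ₀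
      obtain ⟨Cq, hCq0, hCq⟩ := poly_upper Q₀
      set Dq := Q₀.natDegree with hDqdef
      set Da := (Finset.range (d+1)).sup (fun j => (a j).natDegree) with hDadef
      choose Cf hCf0 hCf using fun j => poly_upper (a j)
      set Ca := ∑ j ∈ Finset.range (d+1), Cf j with hCadef
      have hCa0 : 0 ≤ Ca := Finset.sum_nonneg fun j _ => hCf0 j
      have hAbound : ∀ j ∈ Finset.range (d+1), ∀ z : ℂ, 1 ≤ ‖z‖ →
          ‖(a j).eval z‖ ≤ Ca * ‖z‖ ^ Da := by
        intro j hj z hz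
        calc ‖(a j).eval z‖ ≤ Cf j * ‖z‖ ^ (a j).natDegree := hCf j z hz
          _ ≤ Cf j * ‖z‖ ^ Da := by
              refine mul_le_mul_of_nonneg_left ?_ (hCf0 j)
              exact pow_le_pow_right₀ hz (Finset.le_sup (f := fun j => (a j).natDegree) hj)
          _ ≤ Ca * ‖z‖ ^ Da := by
              refine mul_le_mul_of_nonneg_right ?_ (by positivity)
              exact Finset.single_le_sum (fun i _ => hCf0 i) hj
      have hQup : ∀ i ∈ Finset.range (d+1), ∀ z : ℂ, 1 ≤ ‖z‖ →
          ‖Q₀.eval (z ^ k ^ i)‖ ≤ Cq * ‖z‖ ^ (k ^ d * Dq) := by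
        intro i hi z hz
        have hi' : i ≤ d := by have := Finset.mem_range.mp hi; omega
        have h1 : (1:ℝ) ≤ ‖z ^ k ^ i‖ := by rw [norm_pow]; exact one_le_pow₀ hz
        calc ‖Q₀.eval (z ^ k ^ i)‖ ≤ Cq * ‖z ^ k ^ i‖ ^ Dq := hCq _ h1
          _ = Cq * ‖z‖ ^ (k ^ i * Dq) := by rw [norm_pow, ← pow_mul]
          _ ≤ Cq * ‖z‖ ^ (k ^ d * Dq) := by
              refine mul_le_mul_of_nonneg_left ?_ hCq0
              exact pow_le_pow_right₀ hz
                (Nat.mul_le_mul_right _ (Nat.pow_le_pow_right (by omega) hi'))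
      set C₁ := Ca * Cq ^ d with hC₁def
      set D := Da + d * (k ^ d * Dq) with hDdef
      have hC₁0 : 0 ≤ C₁ := by positivity
      have hnum : ∀ j ∈ Finset.range d, ∀ z : ℂ, 1 ≤ ‖z‖ →
          ‖(a j).eval z * ((∏ i ∈ (Finset.range (d+1)).erase j, Q₀.eval (z ^ k ^ i)) *
            G (z ^ k ^ j))‖ ≤ C₁ * ‖z‖ ^ D * ‖G (z ^ k ^ j)‖ := by
        intro j hj z hz
        have hj' : j ∈ Finset.range (d+1) := by
          have := Finset.mem_range.mp hj; exact Finset.mem_range.mpr (by omega)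
        have hcard : ((Finset.range (d+1)).erase j).card = d := by
          rw [Finset.card_erase_of_mem hj', Finset.card_range]
          omega
        have hprod : ‖∏ i ∈ (Finset.range (d+1)).erase j, Q₀.eval (z ^ k ^ i)‖ ≤
            (Cq * ‖z‖ ^ (k ^ d * Dq)) ^ d := by
          rw [norm_prod]
          calc ∏ i ∈ (Finset.range (d+1)).erase j, ‖Q₀.eval (z ^ k ^ i)‖
              ≤ ∏ _i ∈ (Finset.range (d+1)).erase j, (Cq * ‖z‖ ^ (k ^ d * Dq)) :=
                Finset.prod_le_prod (fun i _ => norm_nonneg _)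
                  (fun i hi => hQup i (Finset.mem_of_mem_erase hi) z hz)
            _ = (Cq * ‖z‖ ^ (k ^ d * Dq)) ^ d := by rw [Finset.prod_const, hcard]
        rw [norm_mul, norm_mul]
        have e1 : C₁ * ‖z‖ ^ D = (Ca * ‖z‖ ^ Da) * (Cq * ‖z‖ ^ (k ^ d * Dq)) ^ d := by
          rw [hC₁def, hDdef, pow_add, mul_pow, ← pow_mul, mul_comm (k ^ d * Dq) d]
          ring
        rw [e1]
        have h2 := hAbound j hj' z hz
        have h3 : ‖∏ i ∈ (Finset.range (d+1)).erase j, Q₀.eval (z ^ k ^ i)‖ *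
            ‖G (z ^ k ^ j)‖ ≤ (Cq * ‖z‖ ^ (k ^ d * Dq)) ^ d * ‖G (z ^ k ^ j)‖ :=
          mul_le_mul_of_nonneg_right hprod (norm_nonneg _)
        calc ‖(a j).eval z‖ * (‖∏ i ∈ (Finset.range (d+1)).erase j, Q₀.eval (z ^ k ^ i)‖ *
              ‖G (z ^ k ^ j)‖)
            ≤ (Ca * ‖z‖ ^ Da) * ((Cq * ‖z‖ ^ (k ^ d * Dq)) ^ d * ‖G (z ^ k ^ j)‖) := by
              refine mul_le_mul h2 h3 (by positivity) (by positivity)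
          _ = Ca * ‖z‖ ^ Da * (Cq * ‖z‖ ^ (k ^ d * Dq)) ^ d * ‖G (z ^ k ^ j)‖ := by ring
      have herase : (Finset.range (d+1)).erase d = Finset.range d := by
        rw [Finset.range_add_one, Finset.erase_insert Finset.notMem_range_self]
      set R₀ : ℝ := max (max Ra Rq) 2 with hR₀def
      have hR₀2 : (2:ℝ) ≤ R₀ := le_max_right _ _
      have hR₀1 : (1:ℝ) ≤ R₀ := by linarith
      have hR₀Ra : Ra ≤ R₀ := le_trans (le_max_left _ _) (le_max_left _ _)
      have hR₀Rq : Rq ≤ R₀ := le_trans (le_max_right _ _) (le_max_left _ _)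
      set R₁ : ℝ := R₀ ^ k ^ d with hR₁def
      have hkd0 : k ^ d ≠ 0 := by positivity
      have hR₁R₀ : R₀ ≤ R₁ := le_self_pow₀ hR₀1 hkd0
      have hR₁2 : (2:ℝ) ≤ R₁ := le_trans hR₀2 hR₁R₀
      obtain ⟨C₀', hC₀'⟩ := (isCompact_closedBall (0:ℂ) R₁).exists_bound_of_continuousOn
        hGdiff.continuous.continuousOn
      set C₀ : ℝ := max C₀' 0 with hC₀def
      have hC₀0 : (0:ℝ) ≤ C₀ := le_max_right _ _
      have hC₀ : ∀ w : ℂ, ‖w‖ ≤ R₁ → ‖G w‖ ≤ C₀ := fun w hw =>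
        le_trans (hC₀' w (mem_closedBall_zero_iff.mpr hw)) (le_max_left _ _)
      obtain ⟨m₁, hm₁⟩ : ∃ m : ℕ, (d:ℝ) * C₁ ≤ (c₁ * c₂ ^ d) * 2 ^ m := by
        obtain ⟨n, hn⟩ := exists_nat_ge ((d * C₁) / (c₁ * c₂ ^ d))
        refine ⟨n, ?_⟩
        rw [div_le_iff₀ (by positivity)] at hn
        calc (d:ℝ) * C₁ ≤ n * (c₁ * c₂ ^ d) := hn
          _ ≤ 2 ^ n * (c₁ * c₂ ^ d) := by
              refine mul_le_mul_of_nonneg_right ?_ (by positivity)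
              exact_mod_cast (Nat.lt_two_pow_self (n := n)).le
          _ = (c₁ * c₂ ^ d) * 2 ^ n := mul_comm _ _
      set M := m₁ + D with hMdef
      -- denominator lower bound
      have hden : ∀ z : ℂ, R₀ ≤ ‖z‖ →
          c₁ * c₂ ^ d ≤ ‖(a d).eval z‖ * ∏ i ∈ Finset.range d, ‖Q₀.eval (z ^ k ^ i)‖ := by
        intro z hz
        have hz1 : (1:ℝ) ≤ ‖z‖ := le_trans hR₀1 hz
        have h1 : c₁ ≤ ‖(a d).eval z‖ := hlow₁ z (le_trans hR₀Ra hz)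
        have h2 : c₂ ^ d ≤ ∏ i ∈ Finset.range d, ‖Q₀.eval (z ^ k ^ i)‖ := by
          rw [show c₂ ^ d = ∏ _i ∈ Finset.range d, c₂ by rw [Finset.prod_const, Finset.card_range]]
          refine Finset.prod_le_prod (fun i _ => hc₂.le) (fun i _ => ?_)
          refine hlow₂ _ ?_
          rw [norm_pow]
          calc Rq ≤ ‖z‖ := le_trans hR₀Rq hz
            _ ≤ ‖z‖ ^ k ^ i := le_self_pow₀ hz1 (by positivity)
        exact mul_le_mul h1 h2 (by positivity) (norm_nonneg _)
      -- the main induction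
      have main : ∀ n : ℕ, ∀ w : ℂ, ‖w‖ ≤ R₁ ^ k ^ n → ‖G w‖ ≤ C₀ * max 1 ‖w‖ ^ M := by
        intro n
        induction n with
        | zero =>
          intro w hw
          rw [pow_zero, pow_one] at hw
          have h1 : (1:ℝ) ≤ max 1 ‖w‖ ^ M := one_le_pow₀ (le_max_left _ _)
          calc ‖G w‖ ≤ C₀ := hC₀ w hw
            _ = C₀ * 1 := (mul_one _).symm
            _ ≤ C₀ * max 1 ‖w‖ ^ M := mul_le_mul_of_nonneg_left h1 hC₀0
        | succ n IH =>
          intro w hw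
          by_cases hw' : ‖w‖ ≤ R₁ ^ k ^ n
          · exact IH w hw'
          push_neg at hw'
          have hkn0 : k ^ n ≠ 0 := by positivity
          have hR₁kn : R₁ ≤ R₁ ^ k ^ n := le_self_pow₀ (by linarith) hkn0
          have hw1 : (1:ℝ) < ‖w‖ := by linarith
          have hw0 : w ≠ 0 := by
            intro h
            rw [h, norm_zero] at hw1
            linarith
          obtain ⟨z, hzw⟩ := IsAlgClosed.exists_pow_nat_eq w (n := k ^ d) (by positivity)
          have hnzw : ‖z‖ ^ k ^ d = ‖w‖ := by rw [← norm_pow, hzw]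
          have hzR₀ : R₀ ≤ ‖z‖ := by
            by_contra hc
            push_neg at hc
            have h1 : ‖z‖ ^ k ^ d ≤ R₀ ^ k ^ d := pow_le_pow_left₀ (norm_nonneg z) hc.le _
            rw [hnzw] at h1
            rw [← hR₁def] at h1
            linarith
          have hz1 : (1:ℝ) ≤ ‖z‖ := le_trans hR₀1 hzR₀
          have hz2 : (2:ℝ) ≤ ‖z‖ := le_trans hR₀2 hzR₀
          have hint : ∀ j, j < d → ‖z ^ k ^ j‖ ≤ R₁ ^ k ^ n := by
            intro j hj
            rw [norm_pow]
            have h1 : ‖z‖ ^ k ^ j ≤ ‖z‖ ^ k ^ (d-1) :=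
              pow_le_pow_right₀ hz1 (Nat.pow_le_pow_right (by omega) (by omega))
            have h2 : (‖z‖ ^ k ^ (d-1)) ^ k = ‖w‖ := by
              rw [← pow_mul, ← pow_succ, show d - 1 + 1 = d by omega, hnzw]
            have h3 : ‖w‖ ≤ (R₁ ^ k ^ n) ^ k := by
              rw [← pow_mul, ← pow_succ]
              exact hw
            have h4 : (‖z‖ ^ k ^ (d-1)) ^ k ≤ (R₁ ^ k ^ n) ^ k := by
              rw [h2]; exact h3
            have h5 : ‖z‖ ^ k ^ (d-1) ≤ R₁ ^ k ^ n :=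
              le_of_pow_le_pow_left₀ (by omega) (by positivity) h4
            exact le_trans h1 h5
          have heqz := hE0 z
          simp only [hE] at heqz
          rw [Finset.sum_range_succ] at heqz
          have hTd : (a d).eval z * ((∏ i ∈ (Finset.range (d+1)).erase d,
              Q₀.eval (z ^ k ^ i)) * G (z ^ k ^ d)) =
              -∑ j ∈ Finset.range d, (a j).eval z *
              ((∏ i ∈ (Finset.range (d+1)).erase j, Q₀.eval (z ^ k ^ i)) * G (z ^ k ^ j)) :=
            eq_neg_of_add_eq_zero_right heqz
          have hnorm1 : c₁ * c₂ ^ d * ‖G (z ^ k ^ d)‖ ≤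
              ‖(a d).eval z * ((∏ i ∈ (Finset.range (d+1)).erase d,
                Q₀.eval (z ^ k ^ i)) * G (z ^ k ^ d))‖ := by
            rw [herase, norm_mul, norm_mul, norm_prod, ← mul_assoc]
            exact mul_le_mul_of_nonneg_right (hden z hzR₀) (norm_nonneg _)
          have hGj : ∀ j ∈ Finset.range d, ‖G (z ^ k ^ j)‖ ≤ C₀ * ‖z‖ ^ (k ^ (d-1) * M) := by
            intro j hj
            have hjd : j < d := Finset.mem_range.mp hj
            have h6 := IH _ (hint j hjd)
            have hmax : max 1 ‖z ^ k ^ j‖ = ‖z‖ ^ k ^ j := by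
              rw [norm_pow]
              exact max_eq_right (one_le_pow₀ hz1)
            rw [hmax, ← pow_mul] at h6
            refine h6.trans ?_
            refine mul_le_mul_of_nonneg_left ?_ hC₀0
            refine pow_le_pow_right₀ hz1 ?_
            have h6' : k ^ j ≤ k ^ (d-1) := Nat.pow_le_pow_right (by omega) (by omega)
            exact Nat.mul_le_mul_right _ h6'
          have hsum : ‖∑ j ∈ Finset.range d, (a j).eval z *
              ((∏ i ∈ (Finset.range (d+1)).erase j, Q₀.eval (z ^ k ^ i)) * G (z ^ k ^ j))‖ ≤
              (d:ℝ) * (C₁ * ‖z‖ ^ D * (C₀ * ‖z‖ ^ (k ^ (d-1) * M))) := by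
            refine (norm_sum_le _ _).trans ?_
            have h7 : ∀ j ∈ Finset.range d, ‖(a j).eval z *
                ((∏ i ∈ (Finset.range (d+1)).erase j, Q₀.eval (z ^ k ^ i)) * G (z ^ k ^ j))‖ ≤
                C₁ * ‖z‖ ^ D * (C₀ * ‖z‖ ^ (k ^ (d-1) * M)) := by
              intro j hj
              refine (hnum j hj z hz1).trans ?_
              exact mul_le_mul_of_nonneg_left (hGj j hj) (by positivity)
            calc ∑ j ∈ Finset.range d, ‖(a j).eval z *
                  ((∏ i ∈ (Finset.range (d+1)).erase j, Q₀.eval (z ^ k ^ i)) * G (z ^ k ^ j))‖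
                ≤ ∑ _j ∈ Finset.range d, (C₁ * ‖z‖ ^ D * (C₀ * ‖z‖ ^ (k ^ (d-1) * M))) :=
                  Finset.sum_le_sum h7
              _ = (d:ℝ) * (C₁ * ‖z‖ ^ D * (C₀ * ‖z‖ ^ (k ^ (d-1) * M))) := by
                  rw [Finset.sum_const, Finset.card_range, nsmul_eq_mul]
          have hcomb : c₁ * c₂ ^ d * ‖G w‖ ≤
              (d:ℝ) * (C₁ * ‖z‖ ^ D * (C₀ * ‖z‖ ^ (k ^ (d-1) * M))) := by
            rw [← hzw]
            refine le_trans hnorm1 ?_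
            rw [hTd, norm_neg]
            exact hsum
          -- exponent arithmetic
          have hexp : m₁ + (D + k ^ (d-1) * M) ≤ k ^ d * M := by
            have h8 : 1 + k ^ (d-1) ≤ k ^ d := by
              have h9 : k ^ d = k ^ (d-1) * k := by
                rw [← pow_succ, show d - 1 + 1 = d by omega]
              have h10 : 1 ≤ k ^ (d-1) := Nat.one_le_pow _ _ (by omega)
              calc 1 + k ^ (d-1) ≤ k ^ (d-1) + k ^ (d-1) := by omega
                _ = k ^ (d-1) * 2 := by ring
                _ ≤ k ^ (d-1) * k := Nat.mul_le_mul_left _ hk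
                _ = k ^ d := h9.symm
            calc m₁ + (D + k ^ (d-1) * M) = M + k ^ (d-1) * M := by rw [hMdef]; ring
              _ = (1 + k ^ (d-1)) * M := by ring
              _ ≤ k ^ d * M := Nat.mul_le_mul_right _ h8
          have hrhs : (d:ℝ) * (C₁ * ‖z‖ ^ D * (C₀ * ‖z‖ ^ (k ^ (d-1) * M))) ≤
              c₁ * c₂ ^ d * (C₀ * max 1 ‖w‖ ^ M) := by
            have h11 : (d:ℝ) * (C₁ * ‖z‖ ^ D * (C₀ * ‖z‖ ^ (k ^ (d-1) * M))) =
                ((d:ℝ) * C₁) * C₀ * ‖z‖ ^ (D + k ^ (d-1) * M) := by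
              rw [pow_add]; ring
            have h12 : ((d:ℝ) * C₁) * C₀ * ‖z‖ ^ (D + k ^ (d-1) * M) ≤
                ((c₁ * c₂ ^ d) * 2 ^ m₁) * C₀ * ‖z‖ ^ (D + k ^ (d-1) * M) := by
              refine mul_le_mul_of_nonneg_right (mul_le_mul_of_nonneg_right hm₁ hC₀0)
                (by positivity)
            have h13 : (2:ℝ) ^ m₁ ≤ ‖z‖ ^ m₁ := pow_le_pow_left₀ (by norm_num) hz2 m₁
            have h14 : ((c₁ * c₂ ^ d) * 2 ^ m₁) * C₀ * ‖z‖ ^ (D + k ^ (d-1) * M) ≤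
                ((c₁ * c₂ ^ d) * ‖z‖ ^ m₁) * C₀ * ‖z‖ ^ (D + k ^ (d-1) * M) := by
              refine mul_le_mul_of_nonneg_right (mul_le_mul_of_nonneg_right ?_ hC₀0)
                (by positivity)
              exact mul_le_mul_of_nonneg_left h13 (by positivity)
            have h15 : ((c₁ * c₂ ^ d) * ‖z‖ ^ m₁) * C₀ * ‖z‖ ^ (D + k ^ (d-1) * M) =
                (c₁ * c₂ ^ d) * C₀ * ‖z‖ ^ (m₁ + (D + k ^ (d-1) * M)) := by
              rw [pow_add]; ring
            have h16 : ‖z‖ ^ (m₁ + (D + k ^ (d-1) * M)) ≤ ‖z‖ ^ (k ^ d * M) :=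
              pow_le_pow_right₀ hz1 hexp
            have h17 : ‖z‖ ^ (k ^ d * M) = max 1 ‖w‖ ^ M := by
              rw [pow_mul, hnzw, max_eq_right hw1.le]
            calc (d:ℝ) * (C₁ * ‖z‖ ^ D * (C₀ * ‖z‖ ^ (k ^ (d-1) * M)))
                = ((d:ℝ) * C₁) * C₀ * ‖z‖ ^ (D + k ^ (d-1) * M) := h11
              _ ≤ ((c₁ * c₂ ^ d) * 2 ^ m₁) * C₀ * ‖z‖ ^ (D + k ^ (d-1) * M) := h12
              _ ≤ ((c₁ * c₂ ^ d) * ‖z‖ ^ m₁) * C₀ * ‖z‖ ^ (D + k ^ (d-1) * M) := h14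
              _ = (c₁ * c₂ ^ d) * C₀ * ‖z‖ ^ (m₁ + (D + k ^ (d-1) * M)) := h15
              _ ≤ (c₁ * c₂ ^ d) * C₀ * ‖z‖ ^ (k ^ d * M) := by
                  exact mul_le_mul_of_nonneg_left h16 (by positivity)
              _ = c₁ * c₂ ^ d * (C₀ * max 1 ‖w‖ ^ M) := by rw [h17]; ring
          have hfin := le_trans hcomb hrhs
          exact le_of_mul_le_mul_left hfin (by positivity)
      have hbound : ∀ w : ℂ, ‖G w‖ ≤ C₀ * max 1 ‖w‖ ^ M := by
        intro w
        obtain ⟨n, hn⟩ := pow_unbounded_of_one_lt ‖w‖ (show (1:ℝ) < R₁ by linarith)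
        refine main n w ?_
        calc ‖w‖ ≤ R₁ ^ n := hn.le
          _ ≤ R₁ ^ k ^ n := pow_le_pow_right₀ (by linarith) (Nat.lt_pow_self (n := n) (by omega : 1 < k)).le
      exact entire_poly_growth M C₀ G hGdiff hbound
  obtain ⟨p, hp⟩ := key
  refine ⟨p, Q₀, hQ₀, fun z hz => ?_⟩
  rw [← hp z, hGf z hz]
  ring
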